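/- Let (I ∪ J, w) be the assignment game with row players I = {1,2,3} and column players J = {4,5,6} induced by the matrix with rows (a, b, d), (c, 0, 0), (f, 0, 0) (i.e. a_{14} = a, a_{15} = b, a_{16} = d, a_{24} = c, a_{34} = f, all other entries 0), where a ≥ b + c, b ≥ d > 0, and c ≥ f > 0. Then the tau-value of w equals its nucleolus, and both equal the allocation x with x_1 = (a+b−c)/2, x_2 = x_3 = 0, x_4 = (a−b+c)/2, x_5 = x_6 = 0. -/

import Mathlib

open Finset

/-- A population monotonic allocation scheme (PMAS) for the TU game `w` on the
finite player set `α`: subgame efficiency on every nonempty coalition, and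
individual payoff monotonicity along coalition inclusion. -/
def IsPMAS {α : Type*} [Fintype α] (w : Finset α → ℝ) (x : Finset α → α → ℝ) : Prop :=
  (∀ S : Finset α, S.Nonempty → ∑ i ∈ S, x S i = w S) ∧
  (∀ S T : Finset α, S ⊆ T → ∀ i ∈ S, x S i ≤ x T i)

/-- `μ` is a matching inside coalition `S`: every pair uses players of `S`,
and each player appears in at most one pair. -/
def IsMatching {I J : Type*} (S : Finset (I ⊕ J)) (μ : Finset (I × J)) : Prop :=
  (∀ p ∈ μ, Sum.inl p.1 ∈ S ∧ Sum.inr p.2 ∈ S) ∧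
  (∀ p ∈ μ, ∀ q ∈ μ, p.1 = q.1 → p = q) ∧
  (∀ p ∈ μ, ∀ q ∈ μ, p.2 = q.2 → p = q)

/-- The assignment game induced by the matrix `A`. -/
noncomputable def assignGame {I J : Type*} [Fintype I] [Fintype J]
    (A : I → J → ℝ) (S : Finset (I ⊕ J)) : ℝ :=
  sSup ((fun μ : Finset (I × J) => ∑ p ∈ μ, A p.1 p.2) '' {μ | IsMatching S μ})

/-- `x` is a core allocation of the game `w`. -/
def InCore {α : Type*} [Fintype α] (w : Finset α → ℝ) (x : α → ℝ) : Prop :=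
  (∑ i, x i) = w Finset.univ ∧ ∀ S : Finset α, w S ≤ ∑ i ∈ S, x i

/-- `x` is PMAS-extendable in the game `w`. -/
def PMASExtendable {α : Type*} [Fintype α] (w : Finset α → ℝ) (x : α → ℝ) : Prop :=
  ∃ y, IsPMAS w y ∧ ∀ i, y Finset.univ i = x i

/-- The upper (utopia) vector. -/
noncomputable def upperVec {α : Type*} [Fintype α] [DecidableEq α]
    (v : Finset α → ℝ) (i : α) : ℝ :=
  v Finset.univ - v (Finset.univ.erase i)

/-- The lower (minimal right) vector. -/
noncomputable def lowerVec {α : Type*} [Fintype α] [DecidableEq α]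
    (v : Finset α → ℝ) (i : α) : ℝ :=
  sSup {t | ∃ S : Finset α, i ∈ S ∧ t = v S - ∑ j ∈ S.erase i, upperVec v j}

/-- `τ` is a tau-value of the game `v`. -/
def IsTauValue {α : Type*} [Fintype α] [DecidableEq α] (v : Finset α → ℝ) (τ : α → ℝ) : Prop :=
  ∃ κ : ℝ, 0 ≤ κ ∧ κ ≤ 1 ∧ (∀ i, τ i = κ * upperVec v i + (1 - κ) * lowerVec v i) ∧
    ∑ i, τ i = v Finset.univ

open scoped Classical in
/-- The nondecreasingly ordered list of satisfactions of the nonempty proper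
coalitions at allocation `x`. -/
noncomputable def satList {α : Type*} [Fintype α] (v : Finset α → ℝ) (x : α → ℝ) : List ℝ :=
  ((Finset.univ.filter (fun S : Finset α => S.Nonempty ∧ S ≠ Finset.univ)).val.map
    (fun S => ∑ i ∈ S, x i - v S)).sort (· ≤ ·)

/-- `x` is the nucleolus of `v`: a core allocation lexicographically maximizing
the nondecreasingly ordered satisfaction vector over the core. -/
noncomputable def IsNucleolus {α : Type*} [Fintype α] (v : Finset α → ℝ) (x : α → ℝ) : Prop :=
  InCore v x ∧ ∀ y, InCore v y →
    satList v y = satList v x ∨ List.Lex (· < ·) (satList v y) (satList v x)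

/-- `A` has Γ-shaped support with corner `(i1, j1)`. -/
def GammaShaped {I J : Type*} (A : I → J → ℝ) (i1 : I) (j1 : J) : Prop :=
  (∀ k l, (k = i1 ∨ l = j1) → 0 < A k l) ∧ (∀ k l, k ≠ i1 → l ≠ j1 → A k l = 0)

/-- The corner `(i1, j1)` of `A` is dominant. -/
def DominantCorner {I J : Type*} (A : I → J → ℝ) (i1 : I) (j1 : J) : Prop :=
  ∀ k l, k ≠ i1 → l ≠ j1 → A i1 l + A k j1 ≤ A i1 j1

section AGLemmas

open Finset Sum

lemma matching_sum_le {I J : Type*} [Fintype I] [Fintype J] [DecidableEq I] [DecidableEq J]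
    (A : I → J → ℝ) (S : Finset (I ⊕ J)) (μ : Finset (I × J)) (hμ : IsMatching S μ)
    (u : I → ℝ) (v : J → ℝ) (hu : ∀ i, 0 ≤ u i) (hv : ∀ j, 0 ≤ v j)
    (hfeas : ∀ i j, Sum.inl i ∈ S → Sum.inr j ∈ S → A i j ≤ u i + v j) :
    ∑ p ∈ μ, A p.1 p.2 ≤ ∑ s ∈ S, Sum.elim u v s := by
  obtain ⟨hmem, hinj1, hinj2⟩ := hμ
  have h1 : ∑ p ∈ μ, A p.1 p.2 ≤ ∑ p ∈ μ, (u p.1 + v p.2) :=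
    Finset.sum_le_sum fun p hp => hfeas _ _ (hmem p hp).1 (hmem p hp).2
  rw [Finset.sum_add_distrib] at h1
  have h2 : ∑ p ∈ μ, u p.1 ≤ ∑ i ∈ S.toLeft, u i := by
    rw [show ∑ p ∈ μ, u p.1 = ∑ i ∈ μ.image Prod.fst, u i from
      (Finset.sum_image (fun p hp q hq h => hinj1 p hp q hq h)).symm]
    apply Finset.sum_le_sum_of_subset_of_nonneg
    · intro i hi
      rw [Finset.mem_image] at hi
      obtain ⟨p, hp, rfl⟩ := hi
      exact Finset.mem_toLeft.2 (hmem p hp).1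
    · exact fun i _ _ => hu i
  have h3 : ∑ p ∈ μ, v p.2 ≤ ∑ j ∈ S.toRight, v j := by
    rw [show ∑ p ∈ μ, v p.2 = ∑ j ∈ μ.image Prod.snd, v j from
      (Finset.sum_image (fun p hp q hq h => hinj2 p hp q hq h)).symm]
    apply Finset.sum_le_sum_of_subset_of_nonneg
    · intro j hj
      rw [Finset.mem_image] at hj
      obtain ⟨p, hp, rfl⟩ := hj
      exact Finset.mem_toRight.2 (hmem p hp).2
    · exact fun j _ _ => hv j
  calc ∑ p ∈ μ, A p.1 p.2 ≤ ∑ p ∈ μ, u p.1 + ∑ p ∈ μ, v p.2 := h1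
    _ ≤ ∑ i ∈ S.toLeft, u i + ∑ j ∈ S.toRight, v j := add_le_add h2 h3
    _ = ∑ s ∈ S, Sum.elim u v s := by
        rw [← Finset.sum_sumElim, Finset.toLeft_disjSum_toRight]

/-! ### general sorted-list lemmas -/

lemma sorted_get_of_countP_ge {L : List ℝ} (hL : L.Pairwise (· ≤ ·)) (q : ℝ → Bool)
    (hq : ∀ r s : ℝ, r ≤ s → q s = true → q r = true)
    (n : ℕ) (hn : n < L.length) (hc : n + 1 ≤ L.countP q) : q (L.get ⟨n, hn⟩) = true := by
  by_contra h
  have hfalse : ∀ m (hm : m < L.length), n ≤ m → q (L.get ⟨m, hm⟩) = false := by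
    intro m hm hnm
    rcases Nat.eq_or_lt_of_le hnm with h' | h'
    · subst h'; simpa using h
    · by_contra h2
      exact h (hq _ _ (hL.rel_get_of_lt (show (⟨n, hn⟩ : Fin L.length) < ⟨m, hm⟩ from h'))
        (by simpa using h2))
  have hsplit : L.countP q = (L.take n).countP q + (L.drop n).countP q := by
    rw [← List.countP_append, List.take_append_drop]
  have h1 : (L.take n).countP q ≤ n := le_trans List.countP_le_length (by simp)
  have h2 : (L.drop n).countP q = 0 := by
    rw [List.countP_eq_zero]
    intro r hr
    rw [List.mem_iff_get] at hr
    obtain ⟨i, rfl⟩ := hr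
    have hld : (List.drop n L).length = L.length - n := List.length_drop
    have hi2 : n + i.1 < L.length := by have h5 := i.2; omega
    have hgd : (L.drop n).get i = L.get ⟨n + i.1, hi2⟩ := by
      simp [List.getElem_drop]
    rw [hgd]
    simp only [hfalse _ hi2 (Nat.le_add_right n i.1)]
    simp
  omega

lemma sorted_get_of_countP_le {L : List ℝ} (hL : L.Pairwise (· ≤ ·)) (q : ℝ → Bool)
    (hq : ∀ r s : ℝ, r ≤ s → q s = true → q r = true)
    (n : ℕ) (hn : n < L.length) (hc : L.countP q ≤ n) : q (L.get ⟨n, hn⟩) = false := by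
  by_contra h
  have htrue : ∀ m (hm : m < L.length), m ≤ n → q (L.get ⟨m, hm⟩) = true := by
    intro m hm hnm
    rcases Nat.eq_or_lt_of_le hnm with h' | h'
    · subst h'; simpa using h
    · exact hq _ _ (hL.rel_get_of_lt (show (⟨m, hm⟩ : Fin L.length) < ⟨n, hn⟩ from h'))
        (by simpa using h)
  have hsplit : L.countP q = (L.take (n+1)).countP q + (L.drop (n+1)).countP q := by
    rw [← List.countP_append, List.take_append_drop]
  have h1 : (L.take (n+1)).countP q = (L.take (n+1)).length := by
    rw [List.countP_eq_length]
    intro r hr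
    rw [List.mem_iff_get] at hr
    obtain ⟨i, rfl⟩ := hr
    have hi : i.1 < L.length := lt_of_lt_of_le i.2 (by simp [List.length_take])
    have hgt : (L.take (n+1)).get i = L.get ⟨i.1, hi⟩ := by simp
    rw [hgt]
    exact htrue _ _ (by have := i.2; simp [List.length_take] at this; omega)
  have hlen : (L.take (n+1)).length = n + 1 := by simp [List.length_take]; omega
  omega

lemma lex_of_prefix_lt : ∀ (n : ℕ) (L1 L2 : List ℝ) (h1 : n < L1.length) (h2 : n < L2.length),
    (∀ i (hi1 : i < L1.length) (hi2 : i < L2.length), i < n → L1.get ⟨i, hi1⟩ = L2.get ⟨i, hi2⟩) →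
    L1.get ⟨n, h1⟩ < L2.get ⟨n, h2⟩ → List.Lex (· < ·) L1 L2 := by
  intro n
  induction n with
  | zero =>
    intro L1 L2 h1 h2 _ hlt
    match L1, L2 with
    | r1 :: t1, r2 :: t2 => exact List.Lex.rel (by simpa using hlt)
  | succ n ih =>
    intro L1 L2 h1 h2 heq hlt
    match L1, L2 with
    | r1 :: t1, r2 :: t2 =>
      have hr : r1 = r2 := heq 0 (by simp) (by simp) (by omega)
      subst hr
      apply List.Lex.cons
      apply ih t1 t2 (by simpa using h1) (by simpa using h2)
      · intro i hi1 hi2 hin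
        have := heq (i+1) (by simpa using hi1) (by simpa using hi2) (by omega)
        simpa using this
      · simpa using hlt

/-! ### satList bridges -/

lemma satList_sorted {α : Type*} [Fintype α] (v : Finset α → ℝ) (x : α → ℝ) :
    (satList v x).Pairwise (· ≤ ·) := Multiset.pairwise_sort _ _

lemma satList_mem {α : Type*} [Fintype α] (v : Finset α → ℝ) (x : α → ℝ) (r : ℝ)
    (hr : r ∈ satList v x) :
    ∃ S : Finset α, (S.Nonempty ∧ S ≠ Finset.univ) ∧ r = ∑ i ∈ S, x i - v S := by
  classical
  rw [satList, Multiset.mem_sort, Multiset.mem_map] at hr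
  obtain ⟨S, hS, rfl⟩ := hr
  rw [Finset.mem_val, Finset.mem_filter] at hS
  exact ⟨S, hS.2, rfl⟩

lemma countP_satList {α : Type*} [Fintype α] [DecidableEq α]
    (v : Finset α → ℝ) (x : α → ℝ) (q : ℝ → Prop) [DecidablePred q] :
    (satList v x).countP (fun r => decide (q r)) =
      (Finset.univ.filter (fun S : Finset α =>
        (S.Nonempty ∧ S ≠ Finset.univ) ∧ q (∑ i ∈ S, x i - v S))).card := by
  classical
  rw [satList]
  rw [← Multiset.coe_countP, Multiset.sort_eq, Multiset.countP_map]
  rw [Finset.filter_congr_decidable]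
  rw [← Finset.filter_val, Finset.filter_filter]
  rfl

lemma satList_length {α : Type*} [Fintype α] [DecidableEq α] (v : Finset α → ℝ) (x : α → ℝ) :
    (satList v x).length
      = (Finset.univ.filter (fun S : Finset α => S.Nonempty ∧ S ≠ Finset.univ)).card := by
  classical
  rw [satList, Multiset.length_sort, Multiset.card_map, Finset.filter_congr_decidable,
    Finset.filter_val]
  rfl

namespace AG

abbrev Plr := Fin 3 ⊕ Fin 3

lemma card62 : (univ.filter (fun S : Finset Plr => S.Nonempty ∧ S ≠ univ)).card = 62 := by decide

lemma card30 : (univ.filter (fun S : Finset Plr => (S.Nonempty ∧ S ≠ univ) ∧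
    ((Sum.inl 0 ∈ S) ↔ (Sum.inr 0 ∈ S)))).card = 30 := by decide

lemma card31a : (univ.filter (fun S : Finset Plr => (S.Nonempty ∧ S ≠ univ) ∧
    (((Sum.inl 0 ∈ S) ↔ (Sum.inr 0 ∈ S)) ∨ S = {Sum.inl 0, Sum.inr 1}))).card = 31 := by decide

lemma card31b : (univ.filter (fun S : Finset Plr => (S.Nonempty ∧ S ≠ univ) ∧
    (((Sum.inl 0 ∈ S) ↔ (Sum.inr 0 ∈ S)) ∨ S = {Sum.inl 1, Sum.inr 0}))).card = 31 := by decide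

variable {a b c d f : ℝ}

lemma sum_support_two (g : Plr → ℝ) (hg : ∀ s, s ≠ Sum.inl 0 → s ≠ Sum.inr 0 → g s = 0)
    (S : Finset Plr) :
    ∑ s ∈ S, g s = (if Sum.inl 0 ∈ S then g (Sum.inl 0) else 0)
      + (if Sum.inr 0 ∈ S then g (Sum.inr 0) else 0) := by
  have key : ∀ s, g s = (if s = Sum.inl 0 then g (Sum.inl 0) else 0)
      + (if s = Sum.inr 0 then g (Sum.inr 0) else 0) := by
    intro s
    by_cases h1 : s = Sum.inl 0
    · subst h1; simp
    · by_cases h2 : s = Sum.inr 0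
      · subst h2; simp
      · simp [h1, h2, hg s h1 h2]
  rw [Finset.sum_congr rfl (fun s _ => key s), Finset.sum_add_distrib,
    Finset.sum_ite_eq' S, Finset.sum_ite_eq' S]

variable (hdom : b + c ≤ a) (hbd : d ≤ b) (hd : 0 < d) (hcf : f ≤ c) (hf : 0 < f)

section Bounds

lemma empty_matching (S : Finset Plr) : IsMatching S (∅ : Finset (Fin 3 × Fin 3)) := by
  refine ⟨?_, ?_, ?_⟩ <;> intro p hp <;> simp at hp

lemma single_matching (S : Finset Plr) (i j : Fin 3) (hi : Sum.inl i ∈ S) (hj : Sum.inr j ∈ S) :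
    IsMatching S ({(i, j)} : Finset (Fin 3 × Fin 3)) := by
  refine ⟨?_, ?_, ?_⟩
  · intro p hp; simp at hp; subst hp; exact ⟨hi, hj⟩
  · intro p hp q hq _; simp at hp hq; rw [hp, hq]
  · intro p hp q hq _; simp at hp hq; rw [hp, hq]

lemma matching_le_two (S : Finset Plr) (μ : Finset (Fin 3 × Fin 3)) (hμ : IsMatching S μ)
    (u0 v0 : ℝ) (hu0 : 0 ≤ u0) (hv0 : 0 ≤ v0)
    (hfeas : ∀ i j : Fin 3, Sum.inl i ∈ S → Sum.inr j ∈ S →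
      (![![a, b, d], ![c, 0, 0], ![f, 0, 0]] : Fin 3 → Fin 3 → ℝ) i j
        ≤ (![u0, 0, 0] : Fin 3 → ℝ) i + (![v0, 0, 0] : Fin 3 → ℝ) j) :
    ∑ p ∈ μ, (![![a, b, d], ![c, 0, 0], ![f, 0, 0]] : Fin 3 → Fin 3 → ℝ) p.1 p.2
      ≤ (if Sum.inl 0 ∈ S then u0 else 0) + (if Sum.inr 0 ∈ S then v0 else 0) := by
  have h := matching_sum_le _ S μ hμ (![u0, 0, 0]) (![v0, 0, 0])
    (by intro i; fin_cases i <;> simp [hu0]) (by intro j; fin_cases j <;> simp [hv0]) hfeas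
  rw [sum_support_two] at h
  · simpa using h
  · rintro (s | s) h1 h2 <;> fin_cases s <;> simp_all

include hdom hbd hd hcf hf

lemma matching_le_a (S : Finset Plr) (μ : Finset (Fin 3 × Fin 3)) (hμ : IsMatching S μ) :
    ∑ p ∈ μ, (![![a, b, d], ![c, 0, 0], ![f, 0, 0]] : Fin 3 → Fin 3 → ℝ) p.1 p.2
      ≤ (if Sum.inl 0 ∈ S then a - c else 0) + (if Sum.inr 0 ∈ S then c else 0) := by
  apply matching_le_two S μ hμ (a - c) c (by linarith) (by linarith)
  intro i j _ _
  fin_cases i <;> fin_cases j <;> norm_num <;> linarith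

lemma bddAbove_w (S : Finset Plr) :
    BddAbove ((fun μ : Finset (Fin 3 × Fin 3) =>
      ∑ p ∈ μ, (![![a, b, d], ![c, 0, 0], ![f, 0, 0]] : Fin 3 → Fin 3 → ℝ) p.1 p.2) ''
      {μ | IsMatching S μ}) := by
  refine ⟨(if Sum.inl 0 ∈ S then a - c else 0) + (if Sum.inr 0 ∈ S then c else 0), ?_⟩
  rintro r ⟨μ, hμ, rfl⟩
  exact matching_le_a hdom hbd hd hcf hf S μ hμ

lemma w_nonneg (S : Finset Plr) :
    0 ≤ assignGame ![![a, b, d], ![c, 0, 0], ![f, 0, 0]] S := by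
  have h0 : (0:ℝ) ∈ ((fun μ : Finset (Fin 3 × Fin 3) =>
      ∑ p ∈ μ, (![![a, b, d], ![c, 0, 0], ![f, 0, 0]] : Fin 3 → Fin 3 → ℝ) p.1 p.2) ''
      {μ | IsMatching S μ}) := ⟨∅, empty_matching S, by simp⟩
  exact le_csSup (bddAbove_w hdom hbd hd hcf hf S) h0

lemma w_ge_of_matching (S : Finset Plr) (μ : Finset (Fin 3 × Fin 3)) (hμ : IsMatching S μ) :
    ∑ p ∈ μ, (![![a, b, d], ![c, 0, 0], ![f, 0, 0]] : Fin 3 → Fin 3 → ℝ) p.1 p.2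
      ≤ assignGame ![![a, b, d], ![c, 0, 0], ![f, 0, 0]] S :=
  le_csSup (bddAbove_w hdom hbd hd hcf hf S) ⟨μ, hμ, rfl⟩

omit hdom hbd hd hcf hf in
lemma w_le_of_bound (S : Finset Plr) (r : ℝ)
    (h : ∀ μ : Finset (Fin 3 × Fin 3), IsMatching S μ →
      ∑ p ∈ μ, (![![a, b, d], ![c, 0, 0], ![f, 0, 0]] : Fin 3 → Fin 3 → ℝ) p.1 p.2 ≤ r) :
    assignGame ![![a, b, d], ![c, 0, 0], ![f, 0, 0]] S ≤ r := by
  have hne : ((fun μ : Finset (Fin 3 × Fin 3) =>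
      ∑ p ∈ μ, (![![a, b, d], ![c, 0, 0], ![f, 0, 0]] : Fin 3 → Fin 3 → ℝ) p.1 p.2) ''
      {μ | IsMatching S μ}).Nonempty :=
    ⟨_, Set.mem_image_of_mem _ (empty_matching S)⟩
  apply csSup_le hne
  rintro x ⟨μ, hμ, rfl⟩
  exact h μ hμ

lemma w_eq_a (S : Finset Plr) (h1 : Sum.inl 0 ∈ S) (h4 : Sum.inr 0 ∈ S) :
    assignGame ![![a, b, d], ![c, 0, 0], ![f, 0, 0]] S = a := by
  apply le_antisymm
  · apply w_le_of_bound
    intro μ hμ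
    have h := matching_le_a hdom hbd hd hcf hf S μ hμ
    rw [if_pos h1, if_pos h4] at h; linarith
  · have := w_ge_of_matching hdom hbd hd hcf hf S {((0 : Fin 3), (0 : Fin 3))}
      (single_matching S 0 0 h1 h4)
    simpa using this

lemma w_le_b (S : Finset Plr) (h4 : Sum.inr 0 ∉ S) :
    assignGame ![![a, b, d], ![c, 0, 0], ![f, 0, 0]] S
      ≤ (if Sum.inl 0 ∈ S then b else 0) := by
  apply w_le_of_bound
  intro μ hμ
  have hfeas : ∀ i j : Fin 3, Sum.inl i ∈ S → Sum.inr j ∈ S →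
      (![![a, b, d], ![c, 0, 0], ![f, 0, 0]] : Fin 3 → Fin 3 → ℝ) i j
        ≤ (![b, 0, 0] : Fin 3 → ℝ) i + (![(0:ℝ), 0, 0] : Fin 3 → ℝ) j := by
    intro i j _ hj
    fin_cases i <;> fin_cases j <;> first
      | (exact absurd hj h4)
      | (norm_num <;> linarith)
  have h := matching_le_two S μ hμ b 0 (by linarith) le_rfl hfeas
  rw [if_neg h4] at h; simpa using h

lemma w_le_c (S : Finset Plr) (h1 : Sum.inl 0 ∉ S) :
    assignGame ![![a, b, d], ![c, 0, 0], ![f, 0, 0]] S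
      ≤ (if Sum.inr 0 ∈ S then c else 0) := by
  apply w_le_of_bound
  intro μ hμ
  have hfeas : ∀ i j : Fin 3, Sum.inl i ∈ S → Sum.inr j ∈ S →
      (![![a, b, d], ![c, 0, 0], ![f, 0, 0]] : Fin 3 → Fin 3 → ℝ) i j
        ≤ (![(0:ℝ), 0, 0] : Fin 3 → ℝ) i + (![c, 0, 0] : Fin 3 → ℝ) j := by
    intro i j hi _
    fin_cases i <;> fin_cases j <;> first
      | (exact absurd hi h1)
      | (norm_num <;> linarith)
  have h := matching_le_two S μ hμ 0 c le_rfl (by linarith) hfeas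
  rw [if_neg h1] at h; simpa using h

lemma w_eq_0 (S : Finset Plr) (h1 : Sum.inl 0 ∉ S) (h4 : Sum.inr 0 ∉ S) :
    assignGame ![![a, b, d], ![c, 0, 0], ![f, 0, 0]] S = 0 := by
  have h := w_le_b hdom hbd hd hcf hf S h4
  rw [if_neg h1] at h
  exact le_antisymm h (w_nonneg hdom hbd hd hcf hf S)

lemma w_eq_b (S : Finset Plr) (h1 : Sum.inl 0 ∈ S) (h5 : Sum.inr 1 ∈ S)
    (h4 : Sum.inr 0 ∉ S) :
    assignGame ![![a, b, d], ![c, 0, 0], ![f, 0, 0]] S = b := by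
  apply le_antisymm
  · have h := w_le_b hdom hbd hd hcf hf S h4; rwa [if_pos h1] at h
  · have := w_ge_of_matching hdom hbd hd hcf hf S {((0 : Fin 3), (1 : Fin 3))}
      (single_matching S 0 1 h1 h5)
    simpa using this

lemma w_eq_c (S : Finset Plr) (h2 : Sum.inl 1 ∈ S) (h4 : Sum.inr 0 ∈ S)
    (h1 : Sum.inl 0 ∉ S) :
    assignGame ![![a, b, d], ![c, 0, 0], ![f, 0, 0]] S = c := by
  apply le_antisymm
  · have h := w_le_c hdom hbd hd hcf hf S h1; rwa [if_pos h4] at h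
  · have := w_ge_of_matching hdom hbd hd hcf hf S {((1 : Fin 3), (0 : Fin 3))}
      (single_matching S 1 0 h2 h4)
    simpa using this

end Bounds


section Vectors

include hdom hbd hd hcf hf

lemma upperVec_apply (s : Plr) :
    upperVec (assignGame ![![a, b, d], ![c, 0, 0], ![f, 0, 0]]) s
      = Sum.elim (![a - c, 0, 0] : Fin 3 → ℝ) (![a - b, 0, 0] : Fin 3 → ℝ) s := by
  have ha := w_eq_a hdom hbd hd hcf hf univ (mem_univ _) (mem_univ _)
  rcases s with i | j
  · fin_cases i
    · show upperVec _ (Sum.inl 0) = Sum.elim _ _ (Sum.inl 0)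
      rw [upperVec, ha,
        w_eq_c hdom hbd hd hcf hf (univ.erase (Sum.inl 0)) (by decide) (by decide) (by decide)]
      norm_num
    · show upperVec _ (Sum.inl 1) = Sum.elim _ _ (Sum.inl 1)
      rw [upperVec, ha,
        w_eq_a hdom hbd hd hcf hf (univ.erase (Sum.inl 1)) (by decide) (by decide)]
      norm_num
    · show upperVec _ (Sum.inl 2) = Sum.elim _ _ (Sum.inl 2)
      rw [upperVec, ha,
        w_eq_a hdom hbd hd hcf hf (univ.erase (Sum.inl 2)) (by decide) (by decide)]
      norm_num
      simp [Matrix.cons_val_two, Matrix.vecHead, Matrix.vecTail]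
  · fin_cases j
    · show upperVec _ (Sum.inr 0) = Sum.elim _ _ (Sum.inr 0)
      rw [upperVec, ha,
        w_eq_b hdom hbd hd hcf hf (univ.erase (Sum.inr 0)) (by decide) (by decide) (by decide)]
      norm_num
    · show upperVec _ (Sum.inr 1) = Sum.elim _ _ (Sum.inr 1)
      rw [upperVec, ha,
        w_eq_a hdom hbd hd hcf hf (univ.erase (Sum.inr 1)) (by decide) (by decide)]
      norm_num
    · show upperVec _ (Sum.inr 2) = Sum.elim _ _ (Sum.inr 2)
      rw [upperVec, ha,
        w_eq_a hdom hbd hd hcf hf (univ.erase (Sum.inr 2)) (by decide) (by decide)]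
      norm_num
      simp [Matrix.cons_val_two, Matrix.vecHead, Matrix.vecTail]

lemma sum_upperVec_erase (S : Finset Plr) (i : Plr) :
    ∑ j ∈ S.erase i, upperVec (assignGame ![![a, b, d], ![c, 0, 0], ![f, 0, 0]]) j
      = (if Sum.inl 0 ∈ S.erase i then a - c else 0)
        + (if Sum.inr 0 ∈ S.erase i then a - b else 0) := by
  rw [Finset.sum_congr rfl (fun j _ => upperVec_apply hdom hbd hd hcf hf j)]
  rw [sum_support_two _ (by rintro (s | s) h1 h2 <;> fin_cases s <;> simp_all)]
  norm_num

lemma lowerVec_inl0 :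
    lowerVec (assignGame ![![a, b, d], ![c, 0, 0], ![f, 0, 0]]) (Sum.inl 0) = b := by
  have hub : ∀ t ∈ {t | ∃ S : Finset Plr, Sum.inl 0 ∈ S ∧
      t = assignGame ![![a, b, d], ![c, 0, 0], ![f, 0, 0]] S
        - ∑ j ∈ S.erase (Sum.inl 0),
            upperVec (assignGame ![![a, b, d], ![c, 0, 0], ![f, 0, 0]]) j}, t ≤ b := by
    rintro t ⟨S, hS, rfl⟩
    rw [sum_upperVec_erase hdom hbd hd hcf hf]
    rw [if_neg (by simp : Sum.inl 0 ∉ S.erase (Sum.inl 0))]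
    by_cases h4 : Sum.inr 0 ∈ S
    · rw [if_pos (Finset.mem_erase.2 ⟨by simp, h4⟩),
        w_eq_a hdom hbd hd hcf hf S hS h4]
      linarith
    · rw [if_neg (fun hc => h4 (Finset.mem_erase.1 hc).2)]
      have h := w_le_b hdom hbd hd hcf hf S h4
      rw [if_pos hS] at h
      linarith
  have hmem : b ∈ {t | ∃ S : Finset Plr, Sum.inl 0 ∈ S ∧
      t = assignGame ![![a, b, d], ![c, 0, 0], ![f, 0, 0]] S
        - ∑ j ∈ S.erase (Sum.inl 0),
            upperVec (assignGame ![![a, b, d], ![c, 0, 0], ![f, 0, 0]]) j} := by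
    refine ⟨{Sum.inl 0, Sum.inr 1}, by decide, ?_⟩
    rw [sum_upperVec_erase hdom hbd hd hcf hf,
      w_eq_b hdom hbd hd hcf hf _ (by decide) (by decide) (by decide),
      if_neg (by decide), if_neg (by decide)]
    ring
  rw [lowerVec]
  exact le_antisymm (csSup_le ⟨b, hmem⟩ hub) (le_csSup ⟨b, hub⟩ hmem)

lemma lowerVec_inr0 :
    lowerVec (assignGame ![![a, b, d], ![c, 0, 0], ![f, 0, 0]]) (Sum.inr 0) = c := by
  have hub : ∀ t ∈ {t | ∃ S : Finset Plr, Sum.inr 0 ∈ S ∧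
      t = assignGame ![![a, b, d], ![c, 0, 0], ![f, 0, 0]] S
        - ∑ j ∈ S.erase (Sum.inr 0),
            upperVec (assignGame ![![a, b, d], ![c, 0, 0], ![f, 0, 0]]) j}, t ≤ c := by
    rintro t ⟨S, hS, rfl⟩
    rw [sum_upperVec_erase hdom hbd hd hcf hf]
    rw [if_neg (by simp : Sum.inr 0 ∉ S.erase (Sum.inr 0))]
    by_cases h1 : Sum.inl 0 ∈ S
    · rw [if_pos (Finset.mem_erase.2 ⟨by simp, h1⟩),
        w_eq_a hdom hbd hd hcf hf S h1 hS]
      linarith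
    · rw [if_neg (fun hc => h1 (Finset.mem_erase.1 hc).2)]
      have h := w_le_c hdom hbd hd hcf hf S h1
      rw [if_pos hS] at h
      linarith
  have hmem : c ∈ {t | ∃ S : Finset Plr, Sum.inr 0 ∈ S ∧
      t = assignGame ![![a, b, d], ![c, 0, 0], ![f, 0, 0]] S
        - ∑ j ∈ S.erase (Sum.inr 0),
            upperVec (assignGame ![![a, b, d], ![c, 0, 0], ![f, 0, 0]]) j} := by
    refine ⟨{Sum.inl 1, Sum.inr 0}, by decide, ?_⟩
    rw [sum_upperVec_erase hdom hbd hd hcf hf,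
      w_eq_c hdom hbd hd hcf hf _ (by decide) (by decide) (by decide),
      if_neg (by decide), if_neg (by decide)]
    ring
  rw [lowerVec]
  exact le_antisymm (csSup_le ⟨c, hmem⟩ hub) (le_csSup ⟨c, hub⟩ hmem)

lemma lowerVec_zero (s : Plr) (hs1 : s ≠ Sum.inl 0) (hs4 : s ≠ Sum.inr 0) :
    lowerVec (assignGame ![![a, b, d], ![c, 0, 0], ![f, 0, 0]]) s = 0 := by
  have hub : ∀ t ∈ {t | ∃ S : Finset Plr, s ∈ S ∧
      t = assignGame ![![a, b, d], ![c, 0, 0], ![f, 0, 0]] S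
        - ∑ j ∈ S.erase s,
            upperVec (assignGame ![![a, b, d], ![c, 0, 0], ![f, 0, 0]]) j}, t ≤ 0 := by
    rintro t ⟨S, hS, rfl⟩
    rw [sum_upperVec_erase hdom hbd hd hcf hf]
    have e1 : Sum.inl 0 ∈ S.erase s ↔ Sum.inl 0 ∈ S := by
      rw [Finset.mem_erase]
      exact ⟨fun h => h.2, fun h => ⟨fun hc => hs1 hc.symm, h⟩⟩
    have e4 : Sum.inr 0 ∈ S.erase s ↔ Sum.inr 0 ∈ S := by
      rw [Finset.mem_erase]
      exact ⟨fun h => h.2, fun h => ⟨fun hc => hs4 hc.symm, h⟩⟩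
    by_cases h1 : Sum.inl 0 ∈ S <;> by_cases h4 : Sum.inr 0 ∈ S
    · rw [if_pos (e1.2 h1), if_pos (e4.2 h4), w_eq_a hdom hbd hd hcf hf S h1 h4]
      linarith
    · rw [if_pos (e1.2 h1), if_neg (fun hc => h4 (e4.1 hc))]
      have h := w_le_b hdom hbd hd hcf hf S h4
      rw [if_pos h1] at h
      linarith
    · rw [if_neg (fun hc => h1 (e1.1 hc)), if_pos (e4.2 h4)]
      have h := w_le_c hdom hbd hd hcf hf S h1
      rw [if_pos h4] at h
      linarith
    · rw [if_neg (fun hc => h1 (e1.1 hc)), if_neg (fun hc => h4 (e4.1 hc)),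
        w_eq_0 hdom hbd hd hcf hf S h1 h4]
      norm_num
  have hmem : (0:ℝ) ∈ {t | ∃ S : Finset Plr, s ∈ S ∧
      t = assignGame ![![a, b, d], ![c, 0, 0], ![f, 0, 0]] S
        - ∑ j ∈ S.erase s,
            upperVec (assignGame ![![a, b, d], ![c, 0, 0], ![f, 0, 0]]) j} := by
    refine ⟨{s}, Finset.mem_singleton_self s, ?_⟩
    rw [Finset.erase_singleton, Finset.sum_empty,
      w_eq_0 hdom hbd hd hcf hf {s} (by simp [Ne.symm hs1]) (by simp [Ne.symm hs4])]
    ring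
  rw [lowerVec]
  exact le_antisymm (csSup_le ⟨0, hmem⟩ hub) (le_csSup ⟨0, hub⟩ hmem)

omit hdom hbd hd hcf hf in
lemma sum_univ_plr (z : Plr → ℝ) :
    ∑ i : Plr, z i = z (Sum.inl 0) + z (Sum.inl 1) + z (Sum.inl 2)
      + (z (Sum.inr 0) + z (Sum.inr 1) + z (Sum.inr 2)) := by
  rw [Fintype.sum_sum_type, Fin.sum_univ_three, Fin.sum_univ_three]

omit hdom hbd hd hcf hf in
lemma xalloc_support :
    ∀ s : Plr, s ≠ Sum.inl 0 → s ≠ Sum.inr 0 →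
      Sum.elim (![(a + b - c) / 2, 0, 0] : Fin 3 → ℝ)
        (![(a - b + c) / 2, 0, 0] : Fin 3 → ℝ) s = 0 := by
  rintro (s | s) h1 h2 <;> fin_cases s <;> simp_all

lemma isTau :
    IsTauValue (assignGame ![![a, b, d], ![c, 0, 0], ![f, 0, 0]])
      (Sum.elim ![(a + b - c) / 2, 0, 0] ![(a - b + c) / 2, 0, 0]) := by
  refine ⟨1/2, by norm_num, by norm_num, ?_, ?_⟩
  · rintro (i | j)
    · fin_cases i
      · show Sum.elim _ _ (Sum.inl 0) = _ * upperVec _ (Sum.inl 0) + _ * lowerVec _ (Sum.inl 0)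
        rw [upperVec_apply hdom hbd hd hcf hf, lowerVec_inl0 hdom hbd hd hcf hf]
        norm_num; ring
      · show Sum.elim _ _ (Sum.inl 1) = _ * upperVec _ (Sum.inl 1) + _ * lowerVec _ (Sum.inl 1)
        rw [upperVec_apply hdom hbd hd hcf hf,
          lowerVec_zero hdom hbd hd hcf hf (Sum.inl 1) (by decide) (by decide)]
        norm_num
      · show Sum.elim _ _ (Sum.inl 2) = _ * upperVec _ (Sum.inl 2) + _ * lowerVec _ (Sum.inl 2)
        rw [upperVec_apply hdom hbd hd hcf hf,
          lowerVec_zero hdom hbd hd hcf hf (Sum.inl 2) (by decide) (by decide)]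
        norm_num
        simp [Matrix.cons_val_two, Matrix.vecHead, Matrix.vecTail]
    · fin_cases j
      · show Sum.elim _ _ (Sum.inr 0) = _ * upperVec _ (Sum.inr 0) + _ * lowerVec _ (Sum.inr 0)
        rw [upperVec_apply hdom hbd hd hcf hf, lowerVec_inr0 hdom hbd hd hcf hf]
        norm_num; ring
      · show Sum.elim _ _ (Sum.inr 1) = _ * upperVec _ (Sum.inr 1) + _ * lowerVec _ (Sum.inr 1)
        rw [upperVec_apply hdom hbd hd hcf hf,
          lowerVec_zero hdom hbd hd hcf hf (Sum.inr 1) (by decide) (by decide)]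
        norm_num
      · show Sum.elim _ _ (Sum.inr 2) = _ * upperVec _ (Sum.inr 2) + _ * lowerVec _ (Sum.inr 2)
        rw [upperVec_apply hdom hbd hd hcf hf,
          lowerVec_zero hdom hbd hd hcf hf (Sum.inr 2) (by decide) (by decide)]
        norm_num
        simp [Matrix.cons_val_two, Matrix.vecHead, Matrix.vecTail]
  · rw [sum_univ_plr, w_eq_a hdom hbd hd hcf hf univ (mem_univ _) (mem_univ _)]
    norm_num; simp [Matrix.cons_val_two, Matrix.vecHead, Matrix.vecTail]; ring

lemma isInCore :
    InCore (assignGame ![![a, b, d], ![c, 0, 0], ![f, 0, 0]])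
      (Sum.elim ![(a + b - c) / 2, 0, 0] ![(a - b + c) / 2, 0, 0]) := by
  constructor
  · rw [sum_univ_plr, w_eq_a hdom hbd hd hcf hf univ (mem_univ _) (mem_univ _)]
    norm_num; simp [Matrix.cons_val_two, Matrix.vecHead, Matrix.vecTail]; ring
  · intro S
    rw [sum_support_two _ (xalloc_support) S]
    have hxl : Sum.elim (![(a + b - c) / 2, 0, 0] : Fin 3 → ℝ)
        (![(a - b + c) / 2, 0, 0] : Fin 3 → ℝ) (Sum.inl 0) = (a + b - c)/2 := by norm_num
    have hxr : Sum.elim (![(a + b - c) / 2, 0, 0] : Fin 3 → ℝ)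
        (![(a - b + c) / 2, 0, 0] : Fin 3 → ℝ) (Sum.inr 0) = (a - b + c)/2 := by norm_num
    rw [hxl, hxr]
    have hb : 0 < b := lt_of_lt_of_le hd hbd
    have hc : 0 < c := lt_of_lt_of_le hf hcf
    by_cases h1 : Sum.inl 0 ∈ S <;> by_cases h4 : Sum.inr 0 ∈ S
    · rw [if_pos h1, if_pos h4, w_eq_a hdom hbd hd hcf hf S h1 h4]; ring_nf; linarith
    · rw [if_pos h1, if_neg h4]
      have h := w_le_b hdom hbd hd hcf hf S h4
      rw [if_pos h1] at h
      linarith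
    · rw [if_neg h1, if_pos h4]
      have h := w_le_c hdom hbd hd hcf hf S h1
      rw [if_pos h4] at h
      linarith
    · rw [if_neg h1, if_neg h4, w_eq_0 hdom hbd hd hcf hf S h1 h4]
      norm_num

end Vectors

end AG

end AGLemmas


/-- For the assignment game with rows `(a, b, d), (c, 0, 0),
(f, 0, 0)`, where `a ≥ b + c`, `b ≥ d > 0`, `c ≥ f > 0`, the tau-value equals
the nucleolus, and both equal the allocation `((a+b-c)/2, 0, 0; (a-b+c)/2, 0, 0)`. -/
theorem assignGame_gamma_tau_eq_nucleolus (a b c d f : ℝ)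
    (hdom : b + c ≤ a) (hbd : d ≤ b) (hd : 0 < d) (hcf : f ≤ c) (hf : 0 < f) :
    IsTauValue (assignGame ![![a, b, d], ![c, 0, 0], ![f, 0, 0]])
      (Sum.elim ![(a + b - c) / 2, 0, 0] ![(a - b + c) / 2, 0, 0]) ∧
    IsNucleolus (assignGame ![![a, b, d], ![c, 0, 0], ![f, 0, 0]])
      (Sum.elim ![(a + b - c) / 2, 0, 0] ![(a - b + c) / 2, 0, 0]) := by
  classical
  have hb : 0 < b := lt_of_lt_of_le hd hbd
  have hc : 0 < c := lt_of_lt_of_le hf hcf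
  have hxcore := AG.isInCore hdom hbd hd hcf hf
  refine ⟨AG.isTau hdom hbd hd hcf hf, hxcore, ?_⟩
  intro y hy
  obtain ⟨hyT, hyS⟩ := hy
  have hx1 : (Sum.elim (![(a + b - c) / 2, 0, 0] : Fin 3 → ℝ)
      (![(a - b + c) / 2, 0, 0] : Fin 3 → ℝ)) (Sum.inl 0) = (a + b - c)/2 := by norm_num
  have hx4 : (Sum.elim (![(a + b - c) / 2, 0, 0] : Fin 3 → ℝ)
      (![(a - b + c) / 2, 0, 0] : Fin 3 → ℝ)) (Sum.inr 0) = (a - b + c)/2 := by norm_num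
  have hy0 : ∀ s : AG.Plr, 0 ≤ y s := by
    intro s
    have h := hyS {s}
    rw [Finset.sum_singleton] at h
    exact le_trans (AG.w_nonneg hdom hbd hd hcf hf {s}) h
  have hsum := hyT
  rw [AG.sum_univ_plr, AG.w_eq_a hdom hbd hd hcf hf univ (mem_univ _) (mem_univ _)] at hsum
  have hy14 : a ≤ y (Sum.inl 0) + y (Sum.inr 0) := by
    have h := hyS {Sum.inl 0, Sum.inr 0}
    rw [Finset.sum_pair (by decide),
      AG.w_eq_a hdom hbd hd hcf hf _ (by decide) (by decide)] at h
    exact h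
  have h2 : y (Sum.inl 1) = 0 := le_antisymm
    (by linarith [hy0 (Sum.inl 2), hy0 (Sum.inr 1), hy0 (Sum.inr 2)]) (hy0 _)
  have h3 : y (Sum.inl 2) = 0 := le_antisymm
    (by linarith [hy0 (Sum.inl 1), hy0 (Sum.inr 1), hy0 (Sum.inr 2)]) (hy0 _)
  have h5 : y (Sum.inr 1) = 0 := le_antisymm
    (by linarith [hy0 (Sum.inl 1), hy0 (Sum.inl 2), hy0 (Sum.inr 2)]) (hy0 _)
  have h6 : y (Sum.inr 2) = 0 := le_antisymm
    (by linarith [hy0 (Sum.inl 1), hy0 (Sum.inl 2), hy0 (Sum.inr 1)]) (hy0 _)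
  have h4eq : y (Sum.inr 0) = a - y (Sum.inl 0) := by linarith
  have hyb : b ≤ y (Sum.inl 0) := by
    have h := hyS {Sum.inl 0, Sum.inr 1}
    rw [Finset.sum_pair (by decide),
      AG.w_eq_b hdom hbd hd hcf hf _ (by decide) (by decide) (by decide)] at h
    linarith
  have hyc : c ≤ y (Sum.inr 0) := by
    have h := hyS {Sum.inl 1, Sum.inr 0}
    rw [Finset.sum_pair (by decide),
      AG.w_eq_c hdom hbd hd hcf hf _ (by decide) (by decide) (by decide)] at h
    linarith
  have hysupp : ∀ s : AG.Plr, s ≠ Sum.inl 0 → s ≠ Sum.inr 0 → y s = 0 := by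
    rintro (s | s) hs1 hs2
    · fin_cases s
      · exact absurd rfl hs1
      · exact h2
      · exact h3
    · fin_cases s
      · exact absurd rfl hs2
      · exact h5
      · exact h6
  by_cases hxy : y = Sum.elim ![(a + b - c) / 2, 0, 0] ![(a - b + c) / 2, 0, 0]
  · left; rw [hxy]
  · right
    have ht : y (Sum.inl 0) ≠ (a + b - c)/2 := by
      intro h
      apply hxy
      funext s
      by_cases hs1 : s = Sum.inl 0
      · subst hs1; rw [h, hx1]
      · by_cases hs4 : s = Sum.inr 0
        · subst hs4; rw [h4eq, h, hx4]; ring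
        · rw [hysupp s hs1 hs4, AG.xalloc_support s hs1 hs4]
    have hlt : b + c < a := by
      rcases lt_or_eq_of_le hdom with h | h
      · exact h
      · exfalso
        apply ht
        have hub : y (Sum.inl 0) ≤ a - c := by linarith
        have heq : y (Sum.inl 0) = b := le_antisymm (by linarith) hyb
        rw [heq, ← h]; ring
    have he0 : (0:ℝ) < (a - b - c)/2 := by linarith
    -- satisfaction facts
    have hsaty : ∀ S : Finset AG.Plr, ((Sum.inl 0 ∈ S) ↔ (Sum.inr 0 ∈ S)) →
        ∑ i ∈ S, y i - assignGame ![![a, b, d], ![c, 0, 0], ![f, 0, 0]] S = 0 := by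
      intro S hZ
      rw [AG.sum_support_two y hysupp S]
      by_cases h1 : Sum.inl 0 ∈ S
      · have h4 := hZ.1 h1
        rw [if_pos h1, if_pos h4, AG.w_eq_a hdom hbd hd hcf hf S h1 h4]
        linarith
      · have h4 : Sum.inr 0 ∉ S := fun hh => h1 (hZ.2 hh)
        rw [if_neg h1, if_neg h4, AG.w_eq_0 hdom hbd hd hcf hf S h1 h4]
        norm_num
    have hsatx : ∀ S : Finset AG.Plr, ((Sum.inl 0 ∈ S) ↔ (Sum.inr 0 ∈ S)) →
        ∑ i ∈ S, (Sum.elim (![(a + b - c) / 2, 0, 0] : Fin 3 → ℝ)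
          (![(a - b + c) / 2, 0, 0] : Fin 3 → ℝ)) i
          - assignGame ![![a, b, d], ![c, 0, 0], ![f, 0, 0]] S = 0 := by
      intro S hZ
      rw [AG.sum_support_two _ AG.xalloc_support S]
      by_cases h1 : Sum.inl 0 ∈ S
      · have h4 := hZ.1 h1
        rw [if_pos h1, if_pos h4, AG.w_eq_a hdom hbd hd hcf hf S h1 h4, hx1, hx4]
        ring
      · have h4 : Sum.inr 0 ∉ S := fun hh => h1 (hZ.2 hh)
        rw [if_neg h1, if_neg h4, AG.w_eq_0 hdom hbd hd hcf hf S h1 h4]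
        norm_num
    have hsatx_ge : ∀ S : Finset AG.Plr, ¬((Sum.inl 0 ∈ S) ↔ (Sum.inr 0 ∈ S)) →
        (a - b - c)/2 ≤ ∑ i ∈ S, (Sum.elim (![(a + b - c) / 2, 0, 0] : Fin 3 → ℝ)
          (![(a - b + c) / 2, 0, 0] : Fin 3 → ℝ)) i
          - assignGame ![![a, b, d], ![c, 0, 0], ![f, 0, 0]] S := by
      intro S hnZ
      rw [AG.sum_support_two _ AG.xalloc_support S, hx1, hx4]
      by_cases h1 : Sum.inl 0 ∈ S <;> by_cases h4 : Sum.inr 0 ∈ S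
      · exact absurd (iff_of_true h1 h4) hnZ
      · rw [if_pos h1, if_neg h4]
        have h := AG.w_le_b hdom hbd hd hcf hf S h4
        rw [if_pos h1] at h
        linarith
      · rw [if_neg h1, if_pos h4]
        have h := AG.w_le_c hdom hbd hd hcf hf S h1
        rw [if_pos h4] at h
        linarith
      · exact absurd (iff_of_false h1 h4) hnZ
    -- list-level facts
    have hsY := satList_sorted (assignGame ![![a, b, d], ![c, 0, 0], ![f, 0, 0]]) y
    have hsX := satList_sorted (assignGame ![![a, b, d], ![c, 0, 0], ![f, 0, 0]])
      (Sum.elim ![(a + b - c) / 2, 0, 0] ![(a - b + c) / 2, 0, 0])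
    have hlenY : (satList (assignGame ![![a, b, d], ![c, 0, 0], ![f, 0, 0]]) y).length = 62 := by
      rw [satList_length, AG.card62]
    have hlenX : (satList (assignGame ![![a, b, d], ![c, 0, 0], ![f, 0, 0]])
        (Sum.elim ![(a + b - c) / 2, 0, 0] ![(a - b + c) / 2, 0, 0])).length = 62 := by
      rw [satList_length, AG.card62]
    have hY30 : 30 < (satList (assignGame ![![a, b, d], ![c, 0, 0], ![f, 0, 0]]) y).length := by
      rw [hlenY]; omega
    have hX30 : 30 < (satList (assignGame ![![a, b, d], ![c, 0, 0], ![f, 0, 0]])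
        (Sum.elim ![(a + b - c) / 2, 0, 0] ![(a - b + c) / 2, 0, 0])).length := by
      rw [hlenX]; omega
    have hdc0 : ∀ r s : ℝ, r ≤ s → decide (s ≤ (0:ℝ)) = true → decide (r ≤ (0:ℝ)) = true := by
      intro r s hrs h; simp only [decide_eq_true_eq] at h ⊢; linarith
    have hdce : ∀ r s : ℝ, r ≤ s → decide (s < (a - b - c)/2) = true
        → decide (r < (a - b - c)/2) = true := by
      intro r s hrs h; simp only [decide_eq_true_eq] at h ⊢; linarith
    -- counts
    have hcntY0 : 30 ≤ (satList (assignGame ![![a, b, d], ![c, 0, 0], ![f, 0, 0]]) y).countP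
        (fun r => decide (r ≤ (0:ℝ))) := by
      rw [countP_satList _ y (fun r => r ≤ (0:ℝ)), ← AG.card30]
      apply Finset.card_le_card
      intro S hS
      rw [Finset.mem_filter] at hS ⊢
      exact ⟨hS.1, hS.2.1, le_of_eq (hsaty S hS.2.2)⟩
    have hcntX0 : 30 ≤ (satList (assignGame ![![a, b, d], ![c, 0, 0], ![f, 0, 0]])
        (Sum.elim ![(a + b - c) / 2, 0, 0] ![(a - b + c) / 2, 0, 0])).countP
        (fun r => decide (r ≤ (0:ℝ))) := by
      rw [countP_satList _ _ (fun r => r ≤ (0:ℝ)), ← AG.card30]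
      apply Finset.card_le_card
      intro S hS
      rw [Finset.mem_filter] at hS ⊢
      exact ⟨hS.1, hS.2.1, le_of_eq (hsatx S hS.2.2)⟩
    have hcntXe : (satList (assignGame ![![a, b, d], ![c, 0, 0], ![f, 0, 0]])
        (Sum.elim ![(a + b - c) / 2, 0, 0] ![(a - b + c) / 2, 0, 0])).countP
        (fun r => decide (r < (a - b - c)/2)) ≤ 30 := by
      rw [countP_satList _ _ (fun r => r < (a - b - c)/2), ← AG.card30]
      apply Finset.card_le_card
      intro S hS
      rw [Finset.mem_filter] at hS ⊢
      refine ⟨hS.1, hS.2.1, ?_⟩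
      by_contra hnZ
      have := hsatx_ge S hnZ
      have h2' := hS.2.2
      linarith
    have hcntYe : 31 ≤ (satList (assignGame ![![a, b, d], ![c, 0, 0], ![f, 0, 0]]) y).countP
        (fun r => decide (r < (a - b - c)/2)) := by
      rw [countP_satList _ y (fun r => r < (a - b - c)/2)]
      rcases lt_or_gt_of_ne ht with htlt | htgt
      · rw [← AG.card31a]
        apply Finset.card_le_card
        intro S hS
        rw [Finset.mem_filter] at hS ⊢
        refine ⟨hS.1, hS.2.1, ?_⟩
        rcases hS.2.2 with hZ | hS0
        · rw [hsaty S hZ]; linarith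
        · subst hS0
          rw [Finset.sum_pair (by decide),
            AG.w_eq_b hdom hbd hd hcf hf _ (by decide) (by decide) (by decide)]
          rw [h5]
          linarith
      · rw [← AG.card31b]
        apply Finset.card_le_card
        intro S hS
        rw [Finset.mem_filter] at hS ⊢
        refine ⟨hS.1, hS.2.1, ?_⟩
        rcases hS.2.2 with hZ | hS0
        · rw [hsaty S hZ]; linarith
        · subst hS0
          rw [Finset.sum_pair (by decide),
            AG.w_eq_c hdom hbd hd hcf hf _ (by decide) (by decide) (by decide)]
          rw [h2, h4eq]
          linarith
    -- prefix zeros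
    have hzY : ∀ i (hi : i < (satList (assignGame ![![a, b, d], ![c, 0, 0], ![f, 0, 0]]) y).length),
        i < 30 → (satList (assignGame ![![a, b, d], ![c, 0, 0], ![f, 0, 0]]) y).get ⟨i, hi⟩ = 0 := by
      intro i hi hi30
      have hle := sorted_get_of_countP_ge hsY _ hdc0 i hi (by omega)
      simp only [decide_eq_true_eq] at hle
      have hge : (0:ℝ) ≤ (satList (assignGame ![![a, b, d], ![c, 0, 0], ![f, 0, 0]]) y).get ⟨i, hi⟩ := by
        obtain ⟨S, _, hSe⟩ := satList_mem _ y _ (List.get_mem _ _)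
        rw [hSe]
        have := hyS S
        linarith
      linarith
    have hzX : ∀ i (hi : i < (satList (assignGame ![![a, b, d], ![c, 0, 0], ![f, 0, 0]])
        (Sum.elim ![(a + b - c) / 2, 0, 0] ![(a - b + c) / 2, 0, 0])).length),
        i < 30 → (satList (assignGame ![![a, b, d], ![c, 0, 0], ![f, 0, 0]])
          (Sum.elim ![(a + b - c) / 2, 0, 0] ![(a - b + c) / 2, 0, 0])).get ⟨i, hi⟩ = 0 := by
      intro i hi hi30
      have hle := sorted_get_of_countP_ge hsX _ hdc0 i hi (by omega)
      simp only [decide_eq_true_eq] at hle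
      have hge : (0:ℝ) ≤ (satList (assignGame ![![a, b, d], ![c, 0, 0], ![f, 0, 0]])
          (Sum.elim ![(a + b - c) / 2, 0, 0] ![(a - b + c) / 2, 0, 0])).get ⟨i, hi⟩ := by
        obtain ⟨S, _, hSe⟩ := satList_mem (assignGame ![![a, b, d], ![c, 0, 0], ![f, 0, 0]])
          (Sum.elim ![(a + b - c) / 2, 0, 0] ![(a - b + c) / 2, 0, 0]) _ (List.get_mem _ _)
        rw [hSe]
        have := hxcore.2 S
        linarith
      linarith
    have hYlt : (satList (assignGame ![![a, b, d], ![c, 0, 0], ![f, 0, 0]]) y).get ⟨30, hY30⟩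
        < (a - b - c)/2 := by
      have := sorted_get_of_countP_ge hsY _ hdce 30 hY30 (by omega)
      simpa only [decide_eq_true_eq] using this
    have hXge : (a - b - c)/2 ≤ (satList (assignGame ![![a, b, d], ![c, 0, 0], ![f, 0, 0]])
        (Sum.elim ![(a + b - c) / 2, 0, 0] ![(a - b + c) / 2, 0, 0])).get ⟨30, hX30⟩ := by
      have := sorted_get_of_countP_le hsX _ hdce 30 hX30 hcntXe
      rw [decide_eq_false_iff_not] at this
      exact not_lt.1 this
    apply lex_of_prefix_lt 30 _ _ hY30 hX30
    · intro i hi1 hi2 hin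
      rw [hzY i hi1 hin, hzX i hi2 hin]
    · linarith
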